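/- Let m ∈ ℝ^n \ {0}, and define on upper half-space the Cl_n-valued function f(x) = (1 - i e_n m/‖m‖) e^{2πi⟨m, x̲⟩ - 2π‖m‖ x_n}, where x̲ = (x_0,...,x_{n-1}) and m is identified with the paravector Σ m_j e_j-component vector in ℝ ⊕ ℝ^{n-1}. Then f is left monogenic: Df = 0 with D = ∂/∂x_0 + Σ_{i=1}^n e_i ∂/∂x_i. -/

import Mathlib

open Real

/-- Partial derivative in the `i`-th coordinate direction. -/
noncomputable def pderiv' {n : ℕ} {A : Type*} [NormedAddCommGroup A] [NormedSpace ℝ A]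
    (i : Fin n) (f : EuclideanSpace ℝ (Fin n) → A) (x : EuclideanSpace ℝ (Fin n)) : A :=
  fderiv ℝ f x (EuclideanSpace.single i 1)

section Aux

variable {A : Type*} [Ring A] [Algebra ℝ A]

lemma pwm_half (x y : A) (h : x + x = y + y) : x = y := by
  have h2 : (2:A) * x = (2:A) * y := by rw [two_mul, two_mul]; exact h
  have e2 : (algebraMap ℝ A 2⁻¹) * (2:A) = 1 := by
    rw [show ((2:A)) = algebraMap ℝ A 2 from (map_ofNat _ 2).symm, ← map_mul]
    norm_num
  calc x = (algebraMap ℝ A 2⁻¹ * 2) * x := by rw [e2, one_mul]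
    _ = algebraMap ℝ A 2⁻¹ * ((2:A) * x) := by rw [mul_assoc]
    _ = algebraMap ℝ A 2⁻¹ * ((2:A) * y) := by rw [h2]
    _ = (algebraMap ℝ A 2⁻¹ * 2) * y := by rw [mul_assoc]
    _ = y := by rw [e2, one_mul]

lemma pwm_mix (s t : ℝ) (x y : A) :
    (algebraMap ℝ A s * x) * (algebraMap ℝ A t * y) = algebraMap ℝ A (s*t) * (x*y) := by
  rw [map_mul, mul_assoc, ← mul_assoc x, ← Algebra.commutes t x, ← mul_assoc, ← mul_assoc,
    mul_assoc _ x y]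

end Aux

section CLM
open Real

noncomputable def pwmP (d : ℕ) (k : Fin (d+2)) : EuclideanSpace ℝ (Fin (d+2)) →L[ℝ] ℂ :=
  Complex.ofRealCLM.comp (EuclideanSpace.proj k)

noncomputable def pwmL (d : ℕ) (m0 r : ℝ) (mv : Fin d → ℝ) :
    EuclideanSpace ℝ (Fin (d+2)) →L[ℝ] ℂ :=
  (2*π*Complex.I*m0) • pwmP d 0
    + (∑ j : Fin d, (2*π*Complex.I*(mv j) : ℂ) • pwmP d (j.castSucc.succ))
    - ((2*π*r : ℝ) : ℂ) • pwmP d (Fin.last (d+1))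

lemma pwmL_apply (d : ℕ) (m0 r : ℝ) (mv : Fin d → ℝ) (y : EuclideanSpace ℝ (Fin (d+2))) :
    pwmL d m0 r mv y = 2 * π * Complex.I *
        ((m0 * y 0 + ∑ j : Fin d, mv j * y j.castSucc.succ : ℝ) : ℂ) -
      2 * π * ((r * y (Fin.last (d + 1)) : ℝ) : ℂ) := by
  simp only [pwmL, pwmP, ContinuousLinearMap.sub_apply, ContinuousLinearMap.add_apply,
    ContinuousLinearMap.smul_apply, ContinuousLinearMap.sum_apply,
    ContinuousLinearMap.coe_comp', Function.comp_apply,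
    PiLp.proj_apply, Complex.ofRealCLM_apply, smul_eq_mul]
  push_cast
  simp only [mul_add, Finset.mul_sum]
  ring_nf

lemma pwmP_single (d : ℕ) (k i : Fin (d+2)) :
    pwmP d k (EuclideanSpace.single i 1) = if k = i then 1 else 0 := by
  simp [pwmP, EuclideanSpace.single_apply, apply_ite Complex.ofReal]

lemma pwmL0 (d : ℕ) (m0 r : ℝ) (mv : Fin d → ℝ) :
    pwmL d m0 r mv (EuclideanSpace.single (0 : Fin (d+2)) 1) = 2*π*Complex.I*m0 := by
  have h1 : ∀ j : Fin d, ((j.castSucc : Fin (d+1)).succ : Fin (d+2)) ≠ 0 :=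
    fun j => Fin.succ_ne_zero _
  have h2 : (Fin.last (d+1) : Fin (d+2)) ≠ 0 := by simp [Fin.ext_iff]
  simp [pwmL, pwmP, EuclideanSpace.single_apply, h1, h2]

lemma pwmLj (d : ℕ) (m0 r : ℝ) (mv : Fin d → ℝ) (j : Fin d) :
    pwmL d m0 r mv (EuclideanSpace.single ((j.castSucc : Fin (d+1)).succ) 1)
      = 2*π*Complex.I*(mv j) := by
  have h2 : (Fin.last (d+1) : Fin (d+2)) ≠ (j.castSucc : Fin (d+1)).succ := by
    simp [Fin.ext_iff]; omega
  have h3 : (0 : Fin (d+2)) ≠ (j.castSucc : Fin (d+1)).succ := (Fin.succ_ne_zero _).symm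
  simp [pwmL, pwmP, EuclideanSpace.single_apply, h2, h3, Fin.succ_inj, Fin.castSucc_inj,
    Finset.sum_ite_eq', mul_ite, mul_one, mul_zero, apply_ite Complex.ofReal]

lemma pwmLlast (d : ℕ) (m0 r : ℝ) (mv : Fin d → ℝ) :
    pwmL d m0 r mv (EuclideanSpace.single ((Fin.last d).succ) 1) = -(2*π*r) := by
  rw [Fin.succ_last]
  have h1 : ∀ j : Fin d, ((j.castSucc : Fin (d+1)).succ : Fin (d+2)) ≠ Fin.last (d+1) := by
    intro j; simp [Fin.ext_iff]; omega
  have h2 : (0 : Fin (d+2)) ≠ Fin.last (d+1) := by simp [Fin.ext_iff]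
  simp [pwmL, pwmP, EuclideanSpace.single_apply, h1, h2]

end CLM

set_option maxRecDepth 8000 in
/-- for a nonzero paravector `m = m₀ + m₁e₁ + ⋯ + m_{n-1}e_{n-1}` in
`ℝ ⊕ ℝ^{n-1}` (here `n = d+1`, generators `e₁,…,eₙ` of the complexified Clifford
algebra, `eₙ = e (Fin.last d)`), the plane-wave exponential
`f(x) = (1 - i eₙ m/‖m‖) e^{2πi⟨m,x̲⟩ - 2π‖m‖xₙ}` is left monogenic:
`Df = 0` with `D = ∂/∂x₀ + Σ_{i=1}^n eᵢ ∂/∂xᵢ`. -/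
theorem plane_wave_monogenic
    {A : Type*} [NormedRing A] [NormedAlgebra ℝ A] [NormedAlgebra ℂ A]
    [IsScalarTower ℝ ℂ A] (d : ℕ)
    (e : Fin (d + 1) → A)
    (hrel : ∀ i j, e i * e j + e j * e i = if i = j then (-2 : A) else 0)
    (m0 : ℝ) (mv : Fin d → ℝ) (hm : ¬(m0 = 0 ∧ mv = 0)) :
    ∀ x : EuclideanSpace ℝ (Fin (d + 2)),
      pderiv' 0
          (fun y : EuclideanSpace ℝ (Fin (d + 2)) =>
            Complex.exp (2 * π * Complex.I *
                ((m0 * y 0 + ∑ j : Fin d, mv j * y j.castSucc.succ : ℝ) : ℂ) -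
              2 * π * ((Real.sqrt (m0 ^ 2 + ∑ j, mv j ^ 2) * y (Fin.last (d + 1)) : ℝ) : ℂ)) •
            ((1 : A) - (Complex.I / ((Real.sqrt (m0 ^ 2 + ∑ j, mv j ^ 2) : ℝ) : ℂ)) •
              (e (Fin.last d) *
                (algebraMap ℝ A m0 + ∑ j : Fin d, mv j • e j.castSucc)))) x +
        ∑ i : Fin (d + 1), e i *
          pderiv' i.succ
            (fun y : EuclideanSpace ℝ (Fin (d + 2)) =>
              Complex.exp (2 * π * Complex.I *
                  ((m0 * y 0 + ∑ j : Fin d, mv j * y j.castSucc.succ : ℝ) : ℂ) -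
                2 * π * ((Real.sqrt (m0 ^ 2 + ∑ j, mv j ^ 2) * y (Fin.last (d + 1)) : ℝ) : ℂ)) •
              ((1 : A) - (Complex.I / ((Real.sqrt (m0 ^ 2 + ∑ j, mv j ^ 2) : ℝ) : ℂ)) •
                (e (Fin.last d) *
                  (algebraMap ℝ A m0 + ∑ j : Fin d, mv j • e j.castSucc)))) x = 0 := by
  intro x
  set am : ℝ →+* A := algebraMap ℝ A with ham
  set amc : ℂ →+* A := algebraMap ℂ A with hamc
  have hsR : ∀ (s : ℝ) (z : A), s • z = am s * z := fun s z => Algebra.smul_def s z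
  have hsC : ∀ (c : ℂ) (z : A), c • z = amc c * z := fun c z => Algebra.smul_def c z
  have hRC : ∀ s : ℝ, am s = amc (s : ℂ) := fun s => by
    rw [ham, hamc, IsScalarTower.algebraMap_apply ℝ ℂ A]; rfl
  have hcomm : ∀ (c : ℂ) (u z : A), u * (amc c * z) = amc c * (u * z) := fun c u z => by
    rw [← mul_assoc, ← Algebra.commutes c u, mul_assoc]
  -- basic positivity
  set r : ℝ := Real.sqrt (m0 ^ 2 + ∑ j, mv j ^ 2) with hrdef
  have hsum : 0 < m0 ^ 2 + ∑ j, mv j ^ 2 := by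
    rcases eq_or_lt_of_le (by positivity : (0:ℝ) ≤ m0 ^ 2 + ∑ j, mv j ^ 2) with h | h
    · exfalso
      have hnn : ∀ j ∈ Finset.univ, (0:ℝ) ≤ mv j ^ 2 := fun j _ => sq_nonneg _
      have hm0 : m0 ^ 2 = 0 := by nlinarith [Finset.sum_nonneg hnn]
      have hs : (∑ j, mv j ^ 2) = 0 := by nlinarith [sq_nonneg m0]
      have hz := (Finset.sum_eq_zero_iff_of_nonneg hnn).1 hs
      refine hm ⟨pow_eq_zero_iff (by norm_num) |>.1 hm0,
        funext fun j => pow_eq_zero_iff (n := 2) (by norm_num) |>.1 (hz j (Finset.mem_univ j))⟩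
    · exact h
  have hr : 0 < r := Real.sqrt_pos.mpr hsum
  have hr2 : r ^ 2 = m0 ^ 2 + ∑ j, mv j ^ 2 := Real.sq_sqrt hsum.le
  have hrne : (r : ℂ) ≠ 0 := by exact_mod_cast hr.ne'
  set nA : A := e (Fin.last d) with hnA
  set M : A := algebraMap ℝ A m0 + ∑ j : Fin d, mv j • e j.castSucc with hM
  set a : A := (1 : A) - (Complex.I / ((r : ℝ) : ℂ)) • (nA * M) with ha
  clear_value r nA M a
  have hM' : M = am m0 + ∑ j : Fin d, am (mv j) * e j.castSucc := by
    rw [hM]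
    exact congrArg _ (Finset.sum_congr rfl fun j _ => hsR _ _)
  have ha' : a = 1 - amc (Complex.I / (r:ℂ)) * (nA * M) := by rw [ha, hsC]
  -- Clifford relations
  have hsq : ∀ i, e i * e i = -1 := by
    intro i
    have h := hrel i i
    rw [if_pos rfl] at h
    exact pwm_half _ _ (by rw [h]; norm_num)
  have hanti : ∀ j : Fin d, nA * e j.castSucc = - (e j.castSucc * nA) := by
    intro j
    have h := hrel (Fin.last d) j.castSucc
    rw [if_neg (Fin.castSucc_lt_last j).ne'] at h
    rw [hnA]
    exact eq_neg_of_add_eq_zero_left h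
  have hnn : nA * nA = -1 := by rw [hnA]; exact hsq (Fin.last d)
  set Mb : A := am m0 - ∑ j : Fin d, am (mv j) * e j.castSucc with hMb
  clear_value Mb
  have hswap : nA * M = Mb * nA := by
    rw [hM', hMb, mul_add, sub_mul, Finset.mul_sum, Finset.sum_mul, sub_eq_add_neg,
      ← Finset.sum_neg_distrib]
    congr 1
    · exact (Algebra.commutes m0 nA).symm
    · refine Finset.sum_congr rfl fun j _ => ?_
      rw [← mul_assoc, ← Algebra.commutes (mv j) nA, mul_assoc, hanti j, mul_neg, mul_assoc]
  have hvv : (∑ j : Fin d, am (mv j) * e j.castSucc) * (∑ j : Fin d, am (mv j) * e j.castSucc)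
      = am (-(∑ j, mv j ^ 2)) := by
    set v : A := ∑ j : Fin d, am (mv j) * e j.castSucc with hv
    have hexp : v * v = ∑ j : Fin d, ∑ k : Fin d,
        am (mv j * mv k) * (e j.castSucc * e k.castSucc) := by
      rw [hv, Finset.sum_mul]
      refine Finset.sum_congr rfl fun j _ => ?_
      rw [Finset.mul_sum]
      exact Finset.sum_congr rfl fun k _ => pwm_mix _ _ _ _
    have hexp2 : v * v = ∑ j : Fin d, ∑ k : Fin d,
        am (mv j * mv k) * (e k.castSucc * e j.castSucc) := by
      rw [hexp, Finset.sum_comm]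
      exact Finset.sum_congr rfl fun j _ => Finset.sum_congr rfl fun k _ => by
        rw [mul_comm (mv k)]
    have hdouble : v * v + v * v = am (-(∑ j, mv j ^ 2)) + am (-(∑ j, mv j ^ 2)) := by
      calc v * v + v * v
          = (∑ j : Fin d, ∑ k : Fin d, am (mv j * mv k) * (e j.castSucc * e k.castSucc))
            + ∑ j : Fin d, ∑ k : Fin d, am (mv j * mv k) * (e k.castSucc * e j.castSucc) :=
            congrArg₂ (· + ·) hexp hexp2
        _ = ∑ j : Fin d, (am (mv j * mv j) * (-2 : A)) := by
            rw [← Finset.sum_add_distrib]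
            refine Finset.sum_congr rfl fun j _ => ?_
            rw [← Finset.sum_add_distrib, Finset.sum_eq_single j]
            · rw [← mul_add, hrel, if_pos rfl]
            · intro k _ hk
              rw [← mul_add, hrel, if_neg (by simpa [Fin.castSucc_inj] using hk.symm), mul_zero]
            · intro h; exact absurd (Finset.mem_univ j) h
        _ = ∑ j : Fin d, am (mv j * mv j * (-2)) := by
            refine Finset.sum_congr rfl fun j _ => ?_
            rw [show ((-2:A)) = am (-2) from by rw [map_neg, map_ofNat], ← map_mul]
        _ = am (∑ j, mv j * mv j * (-2)) := (map_sum am _ _).symm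
        _ = am (-(∑ j, mv j ^ 2)) + am (-(∑ j, mv j ^ 2)) := by
            rw [← map_add]
            refine congrArg (⇑am) ?_
            calc ∑ j, mv j * mv j * (-2)
                = ∑ j : Fin d, (-(mv j ^ 2) + -(mv j ^ 2)) :=
                  Finset.sum_congr rfl fun j _ => by ring
              _ = (∑ j : Fin d, -(mv j ^ 2)) + ∑ j : Fin d, -(mv j ^ 2) :=
                  Finset.sum_add_distrib
              _ = -(∑ j, mv j ^ 2) + -(∑ j, mv j ^ 2) := by rw [Finset.sum_neg_distrib]
    exact pwm_half _ _ hdouble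
  have hMMb : M * Mb = am (m0 ^ 2 + ∑ j, mv j ^ 2) := by
    set v : A := ∑ j : Fin d, am (mv j) * e j.castSucc with hv
    have hc : v * am m0 = am m0 * v := (Algebra.commutes m0 v).symm
    calc M * Mb = am m0 * am m0 - v * v + (v * am m0 - am m0 * v) := by
          rw [hM', hMb]; noncomm_ring
      _ = am m0 * am m0 - v * v := by rw [hc, sub_self, add_zero]
      _ = am (m0 ^ 2 + ∑ j, mv j ^ 2) := by
          rw [hvv, ← map_mul, ← map_sub]
          congr 1
          ring
  have hMnM : M * (nA * M) = am (r ^ 2) * nA := by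
    rw [hswap, ← mul_assoc, hMMb, hr2]
  -- the key pointwise identity
  have hT : amc Complex.I * (M * a) = amc (r : ℂ) * (nA * a) := by
    have hscal : Complex.I / (r:ℂ) * ((r ^ 2 : ℝ) : ℂ) = Complex.I * (r:ℂ) := by
      push_cast
      field_simp
    have hMa : M * a = M - amc (Complex.I * (r:ℂ)) * nA := by
      rw [ha', mul_sub, mul_one, hcomm, hMnM, hRC, ← mul_assoc, ← map_mul, hscal]
    have hNa : nA * a = nA + amc (Complex.I / (r:ℂ)) * M := by
      rw [ha', mul_sub, mul_one, hcomm, ← mul_assoc nA nA M, hnn, neg_one_mul, mul_neg,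
        sub_neg_eq_add]
    rw [hMa, hNa, mul_sub, mul_add, ← mul_assoc, ← mul_assoc, ← map_mul, ← map_mul]
    rw [show Complex.I * (Complex.I * (r:ℂ)) = -(r:ℂ) from by
      rw [← mul_assoc, Complex.I_mul_I, neg_one_mul]]
    rw [show (r:ℂ) * (Complex.I / (r:ℂ)) = Complex.I from by field_simp]
    rw [map_neg, neg_mul, sub_neg_eq_add, add_comm]
  -- the key algebraic identity
  have hMa2 : M * a = am m0 * a + ∑ j : Fin d, am (mv j) * (e j.castSucc * a) := by
    rw [hM', add_mul, Finset.sum_mul]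
    exact congrArg _ (Finset.sum_congr rfl fun j _ => mul_assoc _ _ _)
  have h1 : amc (2*π*Complex.I*(m0:ℂ)) * a
      + ∑ j : Fin d, amc (2*π*Complex.I*((mv j):ℂ)) * (e j.castSucc * a)
      = amc (2*(π:ℂ)) * (amc Complex.I * (M * a)) := by
    simp only [hMa2, mul_add, Finset.mul_sum, map_mul, mul_assoc, hRC]
  have key : amc (2*π*Complex.I*(m0:ℂ)) * a
      + ((∑ j : Fin d, amc (2*π*Complex.I*((mv j):ℂ)) * (e j.castSucc * a))
        + amc (-(2*π*(r:ℂ))) * (nA * a)) = 0 := by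
    rw [← add_assoc, h1, hT, ← mul_assoc, ← map_mul, ← add_mul, ← map_add]
    rw [show (2*(π:ℂ) * (r:ℂ) + -(2*π*(r:ℂ))) = 0 from by ring]
    rw [map_zero, zero_mul]
  -- identify the functions
  have hgoalfun : (fun y : EuclideanSpace ℝ (Fin (d + 2)) =>
      Complex.exp (2 * π * Complex.I *
          ((m0 * y 0 + ∑ j : Fin d, mv j * y j.castSucc.succ : ℝ) : ℂ) -
        2 * π * ((r * y (Fin.last (d + 1)) : ℝ) : ℂ)) • a)
      = fun y => Complex.exp (pwmL d m0 r mv y) • a :=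
    funext fun y => by rw [pwmL_apply]
  have hfd : ∀ i : Fin (d+2),
      fderiv ℝ (fun y => Complex.exp (pwmL d m0 r mv y) • a) x (EuclideanSpace.single i 1)
        = amc (Complex.exp (pwmL d m0 r mv x)
            * pwmL d m0 r mv (EuclideanSpace.single i 1)) * a := by
    intro i
    have hder : HasFDerivAt (fun y => Complex.exp (pwmL d m0 r mv y) • a)
        ((Complex.exp (pwmL d m0 r mv x) • (pwmL d m0 r mv)).smulRight a) x :=
      (((pwmL d m0 r mv).hasFDerivAt).cexp).smul_const a
    rw [hder.fderiv, ← hsC]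
    simp [ContinuousLinearMap.smulRight_apply, smul_smul]
  rw [hgoalfun]
  simp only [pderiv']
  simp only [hfd]
  simp only [hcomm]
  simp only [map_mul, mul_assoc]
  rw [← Finset.mul_sum, ← mul_add]
  have hsum2 : amc (pwmL d m0 r mv (EuclideanSpace.single 0 1)) * a
      + ∑ i : Fin (d+1), amc (pwmL d m0 r mv (EuclideanSpace.single i.succ 1)) * (e i * a)
      = 0 := by
    have hs : ∑ i : Fin (d+1), amc (pwmL d m0 r mv (EuclideanSpace.single i.succ 1)) * (e i * a)
        = (∑ j : Fin d, amc (2*π*Complex.I*((mv j):ℂ)) * (e j.castSucc * a))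
          + amc (-(2*π*(r:ℂ))) * (nA * a) := by
      rw [Fin.sum_univ_castSucc, pwmLlast, hnA]
      congr 1
      exact Finset.sum_congr rfl fun j _ => by rw [pwmLj]
    rw [hs, pwmL0]
    exact key
  rw [hsum2, mul_zero]
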